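/- Let S be a compact surface with boundary carrying a metric whose Gauss curvature satisfies -K = -e^{2β} + H² for a smooth function β and constant H < 0, where Δβ = -K (Δ nonnegative at interior local maxima), and suppose e^β ≤ ε < -H on ∂S. Then e^β ≤ -H everywhere on S; consequently, writing the principal curvatures as μ = -e^β + H and μ' = e^β + H, they satisfy 2H < μ ≤ H and H ≤ μ' < 0. -/
import Mathlib


/-- Maximum-principle bound on the principal curvatures of a CMC `H < 0` surface.
On a compact surface `S` with boundary `bdry`, suppose the Gauss equation
`-K = -e^{2β} + H²` holds, `Δβ = -K` (with `Δ` nonnegative at interior local maxima),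
and `e^β ≤ ε < -H` on the boundary, with a strong maximum principle `hSMP`.  Then
`e^β < -H` everywhere, so the principal curvatures `μ = -e^β + H`, `μ' = e^β + H`
satisfy `2H < μ ≤ H` and `H ≤ μ' < 0`. -/
theorem stmt15 {S : Type*} [TopologicalSpace S] [CompactSpace S] [Nonempty S]
    (bdry : Set S) (hbdry : bdry.Nonempty)
    (β K lapβ : S → ℝ) (H ε : ℝ) (hH : H < 0)
    (hβ : Continuous β)
    (hGauss : ∀ x, -K x = -Real.exp (2 * β x) + H ^ 2)
    (hlapK : ∀ x, lapβ x = -K x)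
    (hmax : ∀ x ∉ bdry, IsLocalMax β x → 0 ≤ lapβ x)
    (hbd : ∀ x ∈ bdry, Real.exp (β x) ≤ ε) (hε : ε < -H)
    (hSMP : (∃ x, Real.exp (β x) = -H) → ∀ y, Real.exp (β y) = -H) :
    ∀ x, Real.exp (β x) ≤ -H ∧
      2 * H < -Real.exp (β x) + H ∧ -Real.exp (β x) + H ≤ H ∧
      H ≤ Real.exp (β x) + H ∧ Real.exp (β x) + H < 0 := by
  -- global max of β
  obtain ⟨x₀, hx₀⟩ := isCompact_univ.exists_isMaxOn Set.univ_nonempty hβ.continuousOn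
  have hmax0 : ∀ y, β y ≤ β x₀ := fun y => hx₀.2 (Set.mem_univ y)
  have hle : ∀ x, Real.exp (β x) ≤ -H := by
    by_cases hbx : x₀ ∈ bdry
    · intro x
      have := hbd x₀ hbx
      have h1 : Real.exp (β x) ≤ Real.exp (β x₀) := Real.exp_le_exp.2 (hmax0 x)
      linarith
    · have hloc : IsLocalMax β x₀ := hx₀.2.isLocalMax (Filter.univ_mem)
      have h0 : 0 ≤ lapβ x₀ := hmax x₀ hbx hloc
      have hG := hGauss x₀
      have hK := hlapK x₀
      have h2 : Real.exp (2 * β x₀) ≤ H ^ 2 := by linarith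
      have h3 : Real.exp (β x₀) ≤ -H := by
        have hsq : Real.exp (β x₀) ^ 2 ≤ (-H) ^ 2 := by
          have : Real.exp (β x₀) ^ 2 = Real.exp (2 * β x₀) := by
            rw [← Real.exp_nat_mul]; norm_num
          rw [this]; nlinarith
        nlinarith [Real.exp_pos (β x₀)]
      intro x
      calc Real.exp (β x) ≤ Real.exp (β x₀) := Real.exp_le_exp.2 (hmax0 x)
        _ ≤ -H := h3
  have hlt : ∀ x, Real.exp (β x) < -H := by
    intro x
    rcases lt_or_eq_of_le (hle x) with h | h
    · exact h
    · exfalso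
      obtain ⟨b, hb⟩ := hbdry
      have := hSMP ⟨x, h⟩ b
      have := hbd b hb
      linarith
  intro x
  have h1 := hlt x
  have h2 := Real.exp_pos (β x)
  refine ⟨hle x, by linarith, by linarith, by linarith, by linarith⟩
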